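/- Let V = {1,2,3,4} and E = {(1,2), (1,3), (2,4), (3,4)}, with R = {1,2} and C = {3,4}. Then the model set M(E) is not identifiable from (R, C): there exist G₀ ≠ G₁ in M(E) with (T(G₀)) c r = (T(G₁)) c r for all c ∈ C, r ∈ R. -/

import Mathlib

open Matrix

/-- The model set `M(E)`: matrices `G` over `RatFunc ℝ` whose sparsity pattern matches the
edge set `E` (i.e. `G j i ≠ 0 ↔ (i,j) ∈ E`) and such that `I - G` is invertible. -/
def ModelSet {V : Type*} [Fintype V] [DecidableEq V] (E : Finset (V × V)) :
    Set (Matrix V V (RatFunc ℝ)) :=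
  {G | (∀ i j : V, G j i ≠ 0 ↔ (i, j) ∈ E) ∧ IsUnit (1 - G)}

/-- The network response matrix `T(G) = (I - G)⁻¹`. -/
noncomputable def netT {V : Type*} [Fintype V] [DecidableEq V]
    (G : Matrix V V (RatFunc ℝ)) : Matrix V V (RatFunc ℝ) := (1 - G)⁻¹

/-- Identifiability of the model set `M(E)` from excited vertices `R` and measured
vertices `C`. -/
def Identifiable {V : Type*} [Fintype V] [DecidableEq V]
    (E : Finset (V × V)) (R C : Finset V) : Prop :=
  ∀ G₀ ∈ ModelSet E, ∀ G₁ ∈ ModelSet E,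
    (∀ c ∈ C, ∀ r ∈ R, netT G₁ c r = netT G₀ c r) → G₁ = G₀

/-- The four-vertex network of Example 1 (vertices `0,1,2,3` standing for `1,2,3,4`, with
edges `(1,2), (1,3), (2,4), (3,4)`, excited vertices `R = {1,2}` and measured vertices
`C = {3,4}`) is not identifiable: there are two distinct models in `M(E)` with the same
response submatrix `T_{C,R}`. -/

instance : CharZero (RatFunc ℝ) :=
  charZero_of_injective_algebraMap (algebraMap ℝ (RatFunc ℝ)).injective

noncomputable def myA₀ : Matrix (Fin 4) (Fin 4) (RatFunc ℝ) :=
  !![0,0,0,0; 1,0,0,0; 1,0,0,0; 0,1,1,0]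

noncomputable def myA₁ : Matrix (Fin 4) (Fin 4) (RatFunc ℝ) :=
  !![0,0,0,0; 3,0,0,0; 1,0,0,0; 0,1,-1,0]

noncomputable def myM₀ : Matrix (Fin 4) (Fin 4) (RatFunc ℝ) :=
  !![1,0,0,0; 1,1,0,0; 1,0,1,0; 2,1,1,1]

noncomputable def myM₁ : Matrix (Fin 4) (Fin 4) (RatFunc ℝ) :=
  !![1,0,0,0; 3,1,0,0; 1,0,1,0; 2,1,-1,1]

lemma hmul₀ : (1 - myA₀) * myM₀ = 1 := by
  ext i j
  fin_cases i <;> fin_cases j <;>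
    simp [myA₀, myM₀, Matrix.mul_apply, Fin.sum_univ_four, Matrix.one_apply,
      Matrix.vecHead, Matrix.vecTail] <;> ring

lemma hmul₁ : (1 - myA₁) * myM₁ = 1 := by
  ext i j
  fin_cases i <;> fin_cases j <;>
    simp [myA₁, myM₁, Matrix.mul_apply, Fin.sum_univ_four, Matrix.one_apply,
      Matrix.vecHead, Matrix.vecTail] <;> ring

lemma hT₀ : netT myA₀ = myM₀ := by
  rw [netT, Matrix.inv_eq_right_inv hmul₀]

lemma hT₁ : netT myA₁ = myM₁ := by
  rw [netT, Matrix.inv_eq_right_inv hmul₁]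

lemma hmem₀ : myA₀ ∈ ModelSet ({(0, 1), (0, 2), (1, 3), (2, 3)} : Finset (Fin 4 × Fin 4)) := by
  constructor
  · intro i j
    fin_cases i <;> fin_cases j <;> norm_num [myA₀] <;> decide
  · exact (Matrix.isUnit_iff_isUnit_det _).2 (Matrix.isUnit_det_of_right_inverse hmul₀)

lemma hmem₁ : myA₁ ∈ ModelSet ({(0, 1), (0, 2), (1, 3), (2, 3)} : Finset (Fin 4 × Fin 4)) := by
  constructor
  · intro i j
    fin_cases i <;> fin_cases j <;> norm_num [myA₁] <;> decide
  · exact (Matrix.isUnit_iff_isUnit_det _).2 (Matrix.isUnit_det_of_right_inverse hmul₁)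

lemma hne : myA₀ ≠ myA₁ := by
  intro h
  have h1 := congrFun (congrFun h 1) 0
  simp only [myA₀, myA₁] at h1
  norm_num at h1

lemma hTeq : ∀ c ∈ ({2, 3} : Finset (Fin 4)), ∀ r ∈ ({0, 1} : Finset (Fin 4)),
    netT myA₀ c r = netT myA₁ c r := by
  intro c hc r hr
  rw [hT₀, hT₁]
  fin_cases hc <;> fin_cases hr <;> simp [myM₀, myM₁]

theorem stmt_17
    (E : Finset (Fin 4 × Fin 4))
    (hE : E = {(0, 1), (0, 2), (1, 3), (2, 3)})
    (R C : Finset (Fin 4)) (hR : R = {0, 1}) (hC : C = {2, 3}) :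
    ¬ Identifiable E R C ∧
      ∃ G₀ ∈ ModelSet E, ∃ G₁ ∈ ModelSet E, G₀ ≠ G₁ ∧
        ∀ c ∈ C, ∀ r ∈ R, netT G₀ c r = netT G₁ c r := by
  subst hE hR hC
  refine ⟨?_, myA₀, hmem₀, myA₁, hmem₁, hne, hTeq⟩
  intro hid
  exact hne (hid myA₁ hmem₁ myA₀ hmem₀ hTeq)
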